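/- Let H be a complex Hilbert space, J a countable index type, n a natural number, ψ : J → Fin n → H a doubly indexed family, and v : J → ℝ with v_j > 0 for all j. For each j let H_j be the (finite-dimensional, hence closed) linear span of {ψ_j(i) : i ∈ Fin n} and P_j the orthogonal projection of H onto H_j. Assume: (i) there exist 0 < m ≤ M < ∞ such that for every f ∈ H, m‖f‖² ≤ ∑_j v_j² ∑_{i} |⟨ψ_j(i), f⟩|² ≤ M‖f‖² (the outer family being summable); (ii) there are constants A_j, B_j with A_j‖P_j f‖² ≤ ∑_i |⟨ψ_j(i), f⟩|² ≤ B_j‖P_j f‖² for all f ∈ H and all j; and (iii) A := inf_j A_j > 0 and B := sup_j B_j < ∞. Then for every f ∈ H the family (v_j²‖P_j f‖²)_j is summable and (m/B)‖f‖² ≤ ∑_j v_j² ‖P_j f‖² ≤ (M/A)‖f‖²; i.e. {H_j} is a fusion frame (frame of subspaces) with respect to the weights {v_j}. -/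

import Mathlib

open scoped ComplexInnerProductSpace

/-- Let `ψ : J → Fin n → H` be a doubly indexed family and `v : J → ℝ`
positive weights.  Let `H_j = span {ψ j i}` and `P j` the orthogonal projection onto
`H_j`.  If the family `(v_j ψ j i)` is a weighted frame with bounds `m, M`, each block
`(ψ j i)_i` is a frame for `H_j` with bounds `A j, B j`, and `A₀ ≤ A j`, `B j ≤ B₀` with
`0 < A₀` and `0 < B₀ < ∞`, then `{H_j}` is a fusion frame with respect to the weights
`{v_j}`, with bounds `m / B₀` and `M / A₀`. -/
theorem weighted_frame_gives_fusion_frame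
    {H : Type*} [NormedAddCommGroup H] [InnerProductSpace ℂ H] [CompleteSpace H]
    {J : Type*} [Countable J] (n : ℕ) (ψ : J → Fin n → H)
    (v : J → ℝ) (hv : ∀ j, 0 < v j)
    (P : J → H →L[ℂ] H)
    (hP : ∀ (j : J) (f : H), P j f ∈ Submodule.span ℂ (Set.range (ψ j)) ∧
      f - P j f ∈ (Submodule.span ℂ (Set.range (ψ j)))ᗮ)
    (m M : ℝ) (hm : 0 < m) (hmM : m ≤ M)
    (hframe : ∀ f : H,
      Summable (fun j => v j ^ 2 * ∑ i, ‖⟪ψ j i, f⟫‖ ^ 2) ∧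
      m * ‖f‖ ^ 2 ≤ ∑' j, v j ^ 2 * ∑ i, ‖⟪ψ j i, f⟫‖ ^ 2 ∧
      ∑' j, v j ^ 2 * ∑ i, ‖⟪ψ j i, f⟫‖ ^ 2 ≤ M * ‖f‖ ^ 2)
    (A B : J → ℝ)
    (hAB : ∀ (j : J) (f : H),
      A j * ‖P j f‖ ^ 2 ≤ ∑ i, ‖⟪ψ j i, f⟫‖ ^ 2 ∧
      ∑ i, ‖⟪ψ j i, f⟫‖ ^ 2 ≤ B j * ‖P j f‖ ^ 2)
    (A₀ B₀ : ℝ) (hA₀ : 0 < A₀) (hB₀ : 0 < B₀)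
    (hA : ∀ j, A₀ ≤ A j) (hB : ∀ j, B j ≤ B₀) :
    ∀ f : H, Summable (fun j => v j ^ 2 * ‖P j f‖ ^ 2) ∧
      (m / B₀) * ‖f‖ ^ 2 ≤ ∑' j, v j ^ 2 * ‖P j f‖ ^ 2 ∧
      ∑' j, v j ^ 2 * ‖P j f‖ ^ 2 ≤ (M / A₀) * ‖f‖ ^ 2 := by
  intro f
  obtain ⟨hsum, hlow, hup⟩ := hframe f
  set g : J → ℝ := fun j => v j ^ 2 * ‖P j f‖ ^ 2 with hg
  set h : J → ℝ := fun j => v j ^ 2 * ∑ i, ‖⟪ψ j i, f⟫‖ ^ 2 with hh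
  have hgnn : ∀ j, 0 ≤ g j := fun j => by positivity
  have key1 : ∀ j, A₀ * g j ≤ h j := by
    intro j
    have h1 := (hAB j f).1
    have h2 : A₀ * ‖P j f‖ ^ 2 ≤ A j * ‖P j f‖ ^ 2 :=
      mul_le_mul_of_nonneg_right (hA j) (by positivity)
    have : A₀ * ‖P j f‖ ^ 2 ≤ ∑ i, ‖⟪ψ j i, f⟫‖ ^ 2 := h2.trans h1
    calc A₀ * g j = v j ^ 2 * (A₀ * ‖P j f‖ ^ 2) := by ring
    _ ≤ v j ^ 2 * ∑ i, ‖⟪ψ j i, f⟫‖ ^ 2 :=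
        mul_le_mul_of_nonneg_left this (by positivity)
  have key2 : ∀ j, h j ≤ B₀ * g j := by
    intro j
    have h1 := (hAB j f).2
    have h2 : B j * ‖P j f‖ ^ 2 ≤ B₀ * ‖P j f‖ ^ 2 :=
      mul_le_mul_of_nonneg_right (hB j) (by positivity)
    calc h j = v j ^ 2 * ∑ i, ‖⟪ψ j i, f⟫‖ ^ 2 := rfl
    _ ≤ v j ^ 2 * (B₀ * ‖P j f‖ ^ 2) :=
        mul_le_mul_of_nonneg_left (h1.trans h2) (by positivity)
    _ = B₀ * g j := by ring
  have hgsum : Summable g := by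
    have : Summable (fun j => A₀⁻¹ * h j) := hsum.mul_left _
    refine Summable.of_nonneg_of_le hgnn (fun j => ?_) this
    rw [inv_mul_eq_div, le_div_iff₀' hA₀]
    exact key1 j
  refine ⟨hgsum, ?_, ?_⟩
  · have h1 : ∑' j, h j ≤ ∑' j, B₀ * g j :=
      Summable.tsum_le_tsum key2 hsum (hgsum.mul_left _)
    rw [tsum_mul_left] at h1
    have := hlow.trans h1
    rw [div_mul_eq_mul_div, div_le_iff₀ hB₀, mul_comm (∑' j, g j) B₀]
    exact this
  · have h1 : ∑' j, A₀ * g j ≤ ∑' j, h j :=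
      Summable.tsum_le_tsum key1 (hgsum.mul_left _) hsum
    rw [tsum_mul_left] at h1
    have := h1.trans hup
    rw [div_mul_eq_mul_div, le_div_iff₀ hA₀, mul_comm (∑' j, g j) A₀]
    exact this
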